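/- arXiv:0801.1966 — 4 statements merged into one kernel-verified Lean document; each statement's English description precedes it below -/
import Mathlib

section
/- Let X be a nonempty set and let L be a coherent lower prevision on X such that L(f∘T) ≥ L(f) for every gamble f on X and every map T : X → X. Then L is the vacuous lower prevision: L(f) = inf f for every gamble f on X. -/
def IsGamble {X : Type*} (f : X → ℝ) : Prop :=
  BddAbove (Set.range f) ∧ BddBelow (Set.range f)

def IsCoherentLowerPrevision {X : Type*} (L : (X → ℝ) → ℝ) : Prop :=
  (∀ f : X → ℝ, IsGamble f → sInf (Set.range f) ≤ L f) ∧
  (∀ f g : X → ℝ, IsGamble f → IsGamble g → L f + L g ≤ L (f + g)) ∧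
  (∀ f : X → ℝ, IsGamble f → ∀ c : ℝ, 0 ≤ c → L (c • f) = c * L f)

def IsCoherentPrevision {X : Type*} (P : (X → ℝ) → ℝ) : Prop :=
  (∀ f g : X → ℝ, IsGamble f → IsGamble g → P (f + g) = P f + P g) ∧
  (∀ f : X → ℝ, IsGamble f → sInf (Set.range f) ≤ P f)

def IsTransformationMonoid {X : Type*} (𝒯 : Set (X → X)) : Prop :=
  id ∈ 𝒯 ∧ ∀ S ∈ 𝒯, ∀ T ∈ 𝒯, S ∘ T ∈ 𝒯

def Dominating {X : Type*} (L : (X → ℝ) → ℝ) : Set ((X → ℝ) → ℝ) :=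
  {P | IsCoherentPrevision P ∧ ∀ f : X → ℝ, IsGamble f → L f ≤ P f}

theorem stmt2 (X : Type*) [Nonempty X] (L : (X → ℝ) → ℝ)
    (hL : IsCoherentLowerPrevision L)
    (hinv : ∀ f : X → ℝ, IsGamble f → ∀ T : X → X, L f ≤ L (f ∘ T)) :
    ∀ f : X → ℝ, IsGamble f → L f = sInf (Set.range f) := by
  obtain ⟨h1, h2, h3⟩ := hL
  have hconstg : ∀ c : ℝ, IsGamble (fun _ : X => c) := by
    intro c
    constructor
    · exact ⟨c, by rintro y ⟨x, rfl⟩; exact le_rfl⟩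
    · exact ⟨c, by rintro y ⟨x, rfl⟩; exact le_rfl⟩
  have hsconst : ∀ c : ℝ, sInf (Set.range (fun _ : X => c)) = c := by
    intro c; rw [Set.range_const, csInf_singleton]
  have hzero : L (fun _ : X => 0) = 0 := by
    have := h3 (fun _ : X => 0) (hconstg 0) 0 le_rfl
    simp only [zero_smul, zero_mul] at this
    exact this
  have hconst : ∀ c : ℝ, L (fun _ : X => c) = c := by
    intro c
    have hle := h2 (fun _ : X => c) (fun _ : X => -c) (hconstg c) (hconstg (-c))
    have hadd : (fun _ : X => c) + (fun _ : X => -c) = fun _ : X => 0 := by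
      funext x; simp
    rw [hadd, hzero] at hle
    have hlc : c ≤ L (fun _ : X => c) := by
      have := h1 (fun _ : X => c) (hconstg c)
      rwa [hsconst] at this
    have hlnc : -c ≤ L (fun _ : X => -c) := by
      have := h1 (fun _ : X => -c) (hconstg (-c))
      rwa [hsconst] at this
    linarith
  intro f hf
  refine le_antisymm ?_ (h1 f hf)
  apply le_csInf (Set.range_nonempty f)
  rintro y ⟨x, rfl⟩
  have := hinv f hf (fun _ => x)
  have hc : (f ∘ fun _ : X => x) = fun _ : X => f x := rfl
  rw [hc, hconst] at this
  exact this
end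

section
/- Let X be a nonempty set, 𝒯 a monoid of transformations of X, L a coherent lower prevision on X, D = {f : f is a gamble and L(f) ≥ 0}, and 𝓜(L) the set of coherent previsions dominating L. Then the following are equivalent: (1) f − f∘T ∈ D and f∘T − f ∈ D for every gamble f and every T ∈ 𝒯; (2) L(f − f∘T) ≥ 0 and L(f∘T − f) ≥ 0 (and then necessarily L(f − f∘T) = L(f∘T − f) = 0) for every gamble f and every T ∈ 𝒯; (3) P(f∘T) = P(f) for every P ∈ 𝓜(L), every gamble f and every T ∈ 𝒯. -/
lemma IsGamble.add {X : Type*} {f g : X → ℝ} (hf : IsGamble f) (hg : IsGamble g) :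
    IsGamble (f + g) := by
  obtain ⟨⟨a, ha⟩, ⟨b, hb⟩⟩ := hf
  obtain ⟨⟨c, hc⟩, ⟨d, hd⟩⟩ := hg
  constructor
  · exact ⟨a + c, by rintro _ ⟨x, rfl⟩; exact add_le_add (ha ⟨x, rfl⟩) (hc ⟨x, rfl⟩)⟩
  · exact ⟨b + d, by rintro _ ⟨x, rfl⟩; exact add_le_add (hb ⟨x, rfl⟩) (hd ⟨x, rfl⟩)⟩

lemma IsGamble.smul {X : Type*} {f : X → ℝ} (hf : IsGamble f) (c : ℝ) :
    IsGamble (c • f) := by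
  obtain ⟨⟨a, ha⟩, ⟨b, hb⟩⟩ := hf
  rcases le_total 0 c with h | h
  · constructor
    · exact ⟨c * a, by rintro _ ⟨x, rfl⟩; exact mul_le_mul_of_nonneg_left (ha ⟨x, rfl⟩) h⟩
    · exact ⟨c * b, by rintro _ ⟨x, rfl⟩; exact mul_le_mul_of_nonneg_left (hb ⟨x, rfl⟩) h⟩
  · constructor
    · exact ⟨c * b, by rintro _ ⟨x, rfl⟩; exact mul_le_mul_of_nonpos_left (hb ⟨x, rfl⟩) h⟩
    · exact ⟨c * a, by rintro _ ⟨x, rfl⟩; exact mul_le_mul_of_nonpos_left (ha ⟨x, rfl⟩) h⟩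

lemma IsGamble.neg {X : Type*} {f : X → ℝ} (hf : IsGamble f) : IsGamble (-f) := by
  have := hf.smul (-1); simpa using this

lemma IsGamble.sub {X : Type*} {f g : X → ℝ} (hf : IsGamble f) (hg : IsGamble g) :
    IsGamble (f - g) := by
  have := hf.add hg.neg; simpa [sub_eq_add_neg] using this

lemma isGamble_zero {X : Type*} : IsGamble (0 : X → ℝ) :=
  ⟨⟨0, by rintro _ ⟨x, rfl⟩; simp⟩, ⟨0, by rintro _ ⟨x, rfl⟩; simp⟩⟩

lemma IsGamble.comp {X : Type*} {f : X → ℝ} (hf : IsGamble f) (T : X → X) :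
    IsGamble (f ∘ T) := by
  have h : Set.range (f ∘ T) ⊆ Set.range f := Set.range_comp_subset_range T f
  exact ⟨hf.1.mono h, hf.2.mono h⟩

/-- The gambles form a submodule. -/
def gambleSub (X : Type*) : Submodule ℝ (X → ℝ) where
  carrier := {f | IsGamble f}
  add_mem' := fun hf hg => hf.add hg
  zero_mem' := isGamble_zero
  smul_mem' := fun c _ hf => hf.smul c

lemma L_zero {L : (X → ℝ) → ℝ} (hL : IsCoherentLowerPrevision L) : L 0 = 0 := by
  have h := hL.2.2 0 isGamble_zero 0 le_rfl
  simpa using h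

lemma L_neg_le {L : (X → ℝ) → ℝ} (hL : IsCoherentLowerPrevision L) {f : X → ℝ}
    (hf : IsGamble f) : L f + L (-f) ≤ 0 := by
  have h := hL.2.1 f (-f) hf hf.neg
  simpa [L_zero hL] using h

lemma exists_dominating {L : (X → ℝ) → ℝ} (hL : IsCoherentLowerPrevision L)
    (g₀ : X → ℝ) (hg₀ : IsGamble g₀) : ∃ P ∈ Dominating L, P g₀ = L g₀ := by
  classical
  set G := gambleSub X
  set N : G → ℝ := fun h => -L (-(h : X → ℝ)) with hN
  have hNval : ∀ h : G, N h = -L (-(h : X → ℝ)) := fun _ => rfl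
  have hmemneg : ∀ h : G, IsGamble (-(h : X → ℝ)) := fun h => IsGamble.neg h.2
  have N_hom : ∀ c : ℝ, 0 < c → ∀ x : G, N (c • x) = c * N x := by
    intro c hc x
    have : (-(↑(c • x) : X → ℝ)) = c • (-(x : X → ℝ)) := by
      ext t; simp [mul_comm]
    rw [hNval, this, hL.2.2 _ (hmemneg x) c hc.le, hNval]
    ring
  have N_add : ∀ x y : G, N (x + y) ≤ N x + N y := by
    intro x y
    have h := hL.2.1 (-(x : X → ℝ)) (-(y : X → ℝ)) (hmemneg x) (hmemneg y)
    have he : (-(x : X → ℝ)) + (-(y : X → ℝ)) = -(↑(x + y) : X → ℝ) := by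
      ext t; simp; ring
    rw [he] at h
    simp only [hNval]
    linarith
  have hLleN : ∀ h : G, L (h : X → ℝ) ≤ N h := by
    intro h
    have := L_neg_le hL h.2
    rw [hNval]; linarith
  set x₀ : G := ⟨g₀, hg₀⟩ with hx₀
  have H : ∀ c : ℝ, c • x₀ = 0 → c • L g₀ = 0 := by
    intro c hc
    rcases smul_eq_zero.mp hc with h | h
    · simp [h]
    · have : g₀ = 0 := by
        have := congrArg (Subtype.val) h
        simpa [hx₀] using this
      simp [this, L_zero hL]
  set fp : G →ₗ.[ℝ] ℝ := LinearPMap.mkSpanSingleton' x₀ (L g₀) H with hfp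
  have hN0 : N 0 = 0 := by
    rw [hNval]; simp [L_zero hL]
  have key : ∀ c : ℝ, c • L g₀ ≤ N (c • x₀) := by
    intro c
    rcases lt_trichotomy c 0 with h | h | h
    · have hc' : (0:ℝ) < -c := by linarith
      have hfun : (-(↑(c • x₀) : X → ℝ)) = (-c) • g₀ := by
        ext t
        show -(c * g₀ t) = -c * g₀ t
        ring
      rw [hNval, hfun, hL.2.2 g₀ hg₀ (-c) hc'.le]
      simp only [smul_eq_mul]
      linarith [sq_nonneg c]
    · simp [h, hN0]
    · rw [N_hom c h x₀]
      have := hLleN x₀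
      have hx0v : L (x₀ : X → ℝ) = L g₀ := rfl
      rw [hx0v] at this
      calc c • L g₀ = c * L g₀ := rfl
        _ ≤ c * N x₀ := by nlinarith
  have hf_le : ∀ x : fp.domain, fp x ≤ N x := by
    rintro ⟨x, hx⟩
    obtain ⟨c, hc⟩ := Submodule.mem_span_singleton.mp hx
    subst hc
    exact (LinearPMap.mkSpanSingleton'_apply x₀ (L g₀) H c hx).trans_le (key c)
  obtain ⟨ℓ, hℓf, hℓN⟩ := exists_extension_of_le_sublinear fp N N_hom N_add hf_le
  have hdom : ∀ h : G, L (h : X → ℝ) ≤ ℓ h := by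
    intro h
    have h1 : ℓ (-h) ≤ N (-h) := hℓN (-h)
    have h2 : N (-h) = -L ((h : X → ℝ)) := by
      rw [hNval]
      congr 1
      congr 1
      ext t; simp
    rw [map_neg, h2] at h1
    linarith
  set P : (X → ℝ) → ℝ := fun h => if hh : IsGamble h then ℓ ⟨h, hh⟩ else 0 with hP
  have hPval : ∀ (h : X → ℝ) (hh : IsGamble h), P h = ℓ ⟨h, hh⟩ := by
    intro h hh; simp [hP, hh]
  refine ⟨P, ⟨⟨?_, ?_⟩, ?_⟩, ?_⟩
  · intro f g hf hg
    rw [hPval f hf, hPval g hg, hPval (f + g) (hf.add hg)]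
    have : (⟨f + g, hf.add hg⟩ : G) = ⟨f, hf⟩ + ⟨g, hg⟩ := rfl
    rw [this, map_add]
  · intro f hf
    exact le_trans (hL.1 f hf) (by rw [hPval f hf]; exact hdom ⟨f, hf⟩)
  · intro f hf
    rw [hPval f hf]; exact hdom ⟨f, hf⟩
  · rw [hPval g₀ hg₀]
    have hmem : x₀ ∈ fp.domain := by
      rw [hfp, LinearPMap.domain_mkSpanSingleton]
      exact Submodule.mem_span_singleton_self x₀
    have h1 : ℓ x₀ = fp ⟨x₀, hmem⟩ := hℓf ⟨x₀, hmem⟩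
    exact h1.trans (LinearPMap.mkSpanSingleton'_apply_self x₀ (L g₀) H hmem)

theorem stmt3 (X : Type*) [Nonempty X] (𝒯 : Set (X → X))
    (h𝒯 : IsTransformationMonoid 𝒯) (L : (X → ℝ) → ℝ)
    (hL : IsCoherentLowerPrevision L) :
    ((∀ f : X → ℝ, IsGamble f → ∀ T ∈ 𝒯,
        (f - f ∘ T) ∈ {g : X → ℝ | IsGamble g ∧ 0 ≤ L g} ∧
        (f ∘ T - f) ∈ {g : X → ℝ | IsGamble g ∧ 0 ≤ L g}) ↔
      (∀ f : X → ℝ, IsGamble f → ∀ T ∈ 𝒯,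
        0 ≤ L (f - f ∘ T) ∧ 0 ≤ L (f ∘ T - f))) ∧
    ((∀ f : X → ℝ, IsGamble f → ∀ T ∈ 𝒯,
        0 ≤ L (f - f ∘ T) ∧ 0 ≤ L (f ∘ T - f)) →
      ∀ f : X → ℝ, IsGamble f → ∀ T ∈ 𝒯,
        L (f - f ∘ T) = 0 ∧ L (f ∘ T - f) = 0) ∧
    ((∀ f : X → ℝ, IsGamble f → ∀ T ∈ 𝒯,
        0 ≤ L (f - f ∘ T) ∧ 0 ≤ L (f ∘ T - f)) ↔
      (∀ P ∈ Dominating L, ∀ f : X → ℝ, IsGamble f → ∀ T ∈ 𝒯, P (f ∘ T) = P f)) := by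
  obtain ⟨hinf, hsuper, hhom⟩ := hL
  have hL' : IsCoherentLowerPrevision L := ⟨hinf, hsuper, hhom⟩
  have hL0 : L 0 = 0 := L_zero hL'
  refine ⟨?_, ?_, ?_, ?_⟩
  · -- (1) ↔ (2)
    constructor
    · intro h f hf T hT
      exact ⟨(h f hf T hT).1.2, (h f hf T hT).2.2⟩
    · intro h f hf T hT
      exact ⟨⟨hf.sub (hf.comp T), (h f hf T hT).1⟩,
             ⟨(hf.comp T).sub hf, (h f hf T hT).2⟩⟩
  · -- (2) implies the values are zero
    intro h f hf T hT
    obtain ⟨h1, h2⟩ := h f hf T hT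
    have hg1 : IsGamble (f - f ∘ T) := hf.sub (hf.comp T)
    have hg2 : IsGamble (f ∘ T - f) := (hf.comp T).sub hf
    have hsum : (f - f ∘ T) + (f ∘ T - f) = 0 := by ext x; simp
    have := hsuper (f - f ∘ T) (f ∘ T - f) hg1 hg2
    rw [hsum, hL0] at this
    constructor <;> linarith
  · -- (2) → (3)
    intro h P hP f hf T hT
    obtain ⟨⟨hadd, _⟩, hdomi⟩ := hP
    obtain ⟨h1, h2⟩ := h f hf T hT
    have hfT : IsGamble (f ∘ T) := hf.comp T
    have hg1 : IsGamble (f - f ∘ T) := hf.sub hfT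
    have hg2 : IsGamble (f ∘ T - f) := hfT.sub hf
    have e1 : P ((f - f ∘ T) + f ∘ T) = P (f - f ∘ T) + P (f ∘ T) := hadd _ _ hg1 hfT
    have e2 : P ((f ∘ T - f) + f) = P (f ∘ T - f) + P f := hadd _ _ hg2 hf
    rw [show (f - f ∘ T) + f ∘ T = f by ext x; simp] at e1
    rw [show (f ∘ T - f) + f = f ∘ T by ext x; simp] at e2
    have p1 : 0 ≤ P (f - f ∘ T) := le_trans h1 (hdomi _ hg1)
    have p2 : 0 ≤ P (f ∘ T - f) := le_trans h2 (hdomi _ hg2)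
    linarith
  · -- (3) → (2)
    intro h f hf T hT
    have hfT : IsGamble (f ∘ T) := hf.comp T
    constructor
    · obtain ⟨P, hPD, hPg⟩ := exists_dominating hL' (f - f ∘ T) (hf.sub hfT)
      have e1 : P ((f - f ∘ T) + f ∘ T) = P (f - f ∘ T) + P (f ∘ T) :=
        hPD.1.1 _ _ (hf.sub hfT) hfT
      rw [show (f - f ∘ T) + f ∘ T = f by ext x; simp] at e1
      have := h P hPD f hf T hT
      rw [← hPg]; linarith
    · obtain ⟨P, hPD, hPg⟩ := exists_dominating hL' (f ∘ T - f) (hfT.sub hf)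
      have e1 : P ((f ∘ T - f) + f) = P (f ∘ T - f) + P f :=
        hPD.1.1 _ _ (hfT.sub hf) hf
      rw [show (f ∘ T - f) + f = f ∘ T by ext x; simp] at e1
      have := h P hPD f hf T hT
      rw [← hPg]; linarith
end

section
/- There is no coherent prevision P on the set ℕ of natural numbers such that P(f∘π) = P(f) for every gamble f on ℕ and every bijection π : ℕ → ℕ. -/
noncomputable def ind (k : ℕ) (n : ℕ) : ℝ := if n % 4 = k then 1 else 0

noncomputable def evens (n : ℕ) : ℝ := if n % 2 = 0 then 1 else 0

def rho (n : ℕ) : ℕ := if n % 4 = 3 then n - 3 else n + 1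

def pib (n : ℕ) : ℕ := if n % 4 = 0 then n / 2 else 2 * (3 * (n / 4) + n % 4 - 1) + 1

def sig (m : ℕ) : ℕ := if m % 2 = 0 then 2 * m else 4 * ((m - 1) / 2 / 3) + (m - 1) / 2 % 3 + 1

lemma rho_bij : Function.Bijective rho := by
  apply Function.bijective_iff_has_inverse.2
  refine ⟨fun n => if n % 4 = 0 then n + 3 else n - 1, fun n => ?_, fun n => ?_⟩ <;>
    simp only [rho] <;> split_ifs <;> omega

lemma pib_bij : Function.Bijective pib := by
  apply Function.bijective_iff_has_inverse.2
  refine ⟨sig, fun n => ?_, fun m => ?_⟩ <;>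
    simp only [pib, sig] <;> split_ifs <;> omega

lemma gamble01 (f : ℕ → ℝ) (h : ∀ n, 0 ≤ f n ∧ f n ≤ 1) : IsGamble f := by
  constructor
  · exact ⟨1, by rintro _ ⟨n, rfl⟩; exact (h n).2⟩
  · exact ⟨0, by rintro _ ⟨n, rfl⟩; exact (h n).1⟩

lemma gamble_ind (k : ℕ) : IsGamble (ind k) :=
  gamble01 _ (fun n => by unfold ind; split_ifs <;> norm_num)

lemma gamble_evens : IsGamble evens :=
  gamble01 _ (fun n => by unfold evens; split_ifs <;> norm_num)

lemma gamble_add {f g : ℕ → ℝ} (hf : IsGamble f) (hg : IsGamble g) : IsGamble (f + g) := by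
  obtain ⟨⟨A, hA⟩, ⟨B, hB⟩⟩ := hf
  obtain ⟨⟨C, hC⟩, ⟨D, hD⟩⟩ := hg
  exact ⟨⟨A + C, by rintro _ ⟨n, rfl⟩; exact add_le_add (hA ⟨n, rfl⟩) (hC ⟨n, rfl⟩)⟩,
    ⟨B + D, by rintro _ ⟨n, rfl⟩; exact add_le_add (hB ⟨n, rfl⟩) (hD ⟨n, rfl⟩)⟩⟩

lemma ind_comp_rho (k : ℕ) (hk : k ≠ 0) (hk4 : k < 4) : ind k ∘ rho = ind (k - 1) := by
  funext n
  simp only [Function.comp_apply, ind, rho]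
  split_ifs <;> first | rfl | omega

lemma evens_comp_pib : evens ∘ pib = ind 0 := by
  funext n
  simp only [Function.comp_apply, evens, ind, pib]
  split_ifs <;> first | rfl | omega

lemma evens_eq : evens = ind 0 + ind 2 := by
  funext n
  simp only [Pi.add_apply, evens, ind]
  split_ifs <;> first | omega | norm_num

lemma sum_ind : ind 0 + ind 1 + ind 2 + ind 3 = fun _ => (1:ℝ) := by
  funext n
  simp only [Pi.add_apply, ind]
  split_ifs <;> first | omega | norm_num

theorem stmt5 :
    ¬ ∃ P : (ℕ → ℝ) → ℝ, IsCoherentPrevision P ∧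
      ∀ f : ℕ → ℝ, IsGamble f → ∀ π : ℕ → ℕ, Function.Bijective π →
        P (f ∘ π) = P f := by
  rintro ⟨P, ⟨hadd, hinf⟩, hinv⟩
  -- all four residue indicators have the same P
  have h3 : P (ind 2) = P (ind 3) := by
    have := hinv (ind 3) (gamble_ind 3) rho rho_bij
    rwa [ind_comp_rho 3 (by norm_num) (by norm_num)] at this
  have h2 : P (ind 1) = P (ind 2) := by
    have := hinv (ind 2) (gamble_ind 2) rho rho_bij
    rwa [ind_comp_rho 2 (by norm_num) (by norm_num)] at this
  have h1 : P (ind 0) = P (ind 1) := by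
    have := hinv (ind 1) (gamble_ind 1) rho rho_bij
    rwa [ind_comp_rho 1 (by norm_num) (by norm_num)] at this
  -- P evens = P (ind 0)
  have hpe : P (ind 0) = P evens := by
    have := hinv evens gamble_evens pib pib_bij
    rwa [evens_comp_pib] at this
  -- P evens = P (ind 0) + P (ind 2)
  have hpe2 : P evens = P (ind 0) + P (ind 2) := by
    rw [evens_eq]; exact hadd _ _ (gamble_ind 0) (gamble_ind 2)
  -- hence P (ind 0) = 0
  have h0 : P (ind 0) = 0 := by linarith
  -- but sum of four indicators is constant 1
  have hsum : P (ind 0 + ind 1 + ind 2 + ind 3) =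
      P (ind 0) + P (ind 1) + P (ind 2) + P (ind 3) := by
    rw [hadd _ _ (gamble_add (gamble_add (gamble_ind 0) (gamble_ind 1)) (gamble_ind 2))
        (gamble_ind 3),
      hadd _ _ (gamble_add (gamble_ind 0) (gamble_ind 1)) (gamble_ind 2),
      hadd _ _ (gamble_ind 0) (gamble_ind 1)]
  have hone : (1:ℝ) ≤ P (ind 0 + ind 1 + ind 2 + ind 3) := by
    have := hinf (ind 0 + ind 1 + ind 2 + ind 3)
      (gamble_add (gamble_add (gamble_add (gamble_ind 0) (gamble_ind 1)) (gamble_ind 2))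
        (gamble_ind 3))
    rw [sum_ind] at this ⊢
    calc (1:ℝ) = sInf (Set.range fun _ : ℕ => (1:ℝ)) := by
          rw [Set.range_const, csInf_singleton]
      _ ≤ _ := this
  rw [hsum, ← h1, ← h2, ← h1, ← h3, ← h2, ← h1, h0] at hone
  linarith
end

section
/- Let 𝒯 be a monoid of transformations of a nonempty set X, let 𝒟 be a 𝒯-invariant lattice of subsets of X (closed under finite unions and finite intersections, containing ∅ and X, and with T⁻¹(B) ∈ 𝒟 for all B ∈ 𝒟 and T ∈ 𝒯), and let P : 𝒟 → ℝ be monotone (B ⊆ C implies P(B) ≤ P(C)) with P(∅) = 0, P(X) = 1, and weakly 𝒯-invariant, i.e. P(T⁻¹(B)) ≥ P(B) for all B ∈ 𝒟 and T ∈ 𝒯. Then: (1) the inner set function P*, defined on all subsets A of X by P*(A) = sup { P(B) : B ∈ 𝒟, B ⊆ A }, satisfies P*(T⁻¹(A)) ≥ P*(A) for every A ⊆ X and every T ∈ 𝒯; (2) the Choquet functional C, defined on every gamble f by C(f) = inf f + ∫_{inf f}^{sup f} P*({x ∈ X : f(x) ≥ α}) dα (a Riemann integral of a bounded monotone function of α),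 satisfies C(f∘T) ≥ C(f) for every gamble f and every T ∈ 𝒯. -/
noncomputable def innerSetFn {X : Type*} (𝒟 : Set (Set X)) (P : Set X → ℝ)
    (A : Set X) : ℝ :=
  sSup {r : ℝ | ∃ B ∈ 𝒟, B ⊆ A ∧ r = P B}

noncomputable def choquetFn {X : Type*} (𝒟 : Set (Set X)) (P : Set X → ℝ)
    (f : X → ℝ) : ℝ :=
  sInf (Set.range f) +
    ∫ α in (sInf (Set.range f))..(sSup (Set.range f)),
      innerSetFn 𝒟 P {x | α ≤ f x}

theorem stmt12 (X : Type*) [Nonempty X] (𝒯 : Set (X → X))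
    (h𝒯 : IsTransformationMonoid 𝒯)
    (𝒟 : Set (Set X)) (hempty : ∅ ∈ 𝒟) (huniv : Set.univ ∈ 𝒟)
    (hcup : ∀ B ∈ 𝒟, ∀ C ∈ 𝒟, B ∪ C ∈ 𝒟) (hcap : ∀ B ∈ 𝒟, ∀ C ∈ 𝒟, B ∩ C ∈ 𝒟)
    (hinv𝒟 : ∀ B ∈ 𝒟, ∀ T ∈ 𝒯, T ⁻¹' B ∈ 𝒟)
    (P : Set X → ℝ) (hmono : ∀ B ∈ 𝒟, ∀ C ∈ 𝒟, B ⊆ C → P B ≤ P C)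
    (h0 : P ∅ = 0) (h1 : P Set.univ = 1)
    (hwk : ∀ B ∈ 𝒟, ∀ T ∈ 𝒯, P B ≤ P (T ⁻¹' B)) :
    (∀ A : Set X, ∀ T ∈ 𝒯, innerSetFn 𝒟 P A ≤ innerSetFn 𝒟 P (T ⁻¹' A)) ∧
    (∀ f : X → ℝ, IsGamble f → ∀ T ∈ 𝒯,
      choquetFn 𝒟 P f ≤ choquetFn 𝒟 P (f ∘ T)) := by
  have hP1 : ∀ B ∈ 𝒟, P B ≤ 1 := fun B hB => h1 ▸ hmono B hB _ huniv (Set.subset_univ B)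
  have hne : ∀ A : Set X, {r : ℝ | ∃ B ∈ 𝒟, B ⊆ A ∧ r = P B}.Nonempty :=
    fun A => ⟨0, ∅, hempty, Set.empty_subset A, h0.symm⟩
  have hbdd : ∀ A : Set X, BddAbove {r : ℝ | ∃ B ∈ 𝒟, B ⊆ A ∧ r = P B} := by
    intro A
    refine ⟨1, ?_⟩
    rintro r ⟨B, hB, -, rfl⟩
    exact hP1 B hB
  have hmono' : ∀ A A' : Set X, A ⊆ A' → innerSetFn 𝒟 P A ≤ innerSetFn 𝒟 P A' := by
    intro A A' hAA'
    apply csSup_le (hne A)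
    rintro r ⟨B, hB, hBA, rfl⟩
    exact le_csSup (hbdd A') ⟨B, hB, hBA.trans hAA', rfl⟩
  have hnn : ∀ A : Set X, 0 ≤ innerSetFn 𝒟 P A :=
    fun A => le_csSup (hbdd A) ⟨∅, hempty, Set.empty_subset A, h0.symm⟩
  have hle1 : ∀ A : Set X, innerSetFn 𝒟 P A ≤ 1 := by
    intro A
    apply csSup_le (hne A)
    rintro r ⟨B, hB, -, rfl⟩
    exact hP1 B hB
  have hIempty : innerSetFn 𝒟 P ∅ = 0 := by
    refine le_antisymm ?_ (hnn ∅)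
    apply csSup_le (hne ∅)
    rintro r ⟨B, hB, hBe, rfl⟩
    rw [Set.subset_empty_iff] at hBe
    subst hBe
    exact h0.le
  have hIuniv : innerSetFn 𝒟 P Set.univ = 1 := by
    refine le_antisymm (hle1 _) ?_
    exact h1 ▸ le_csSup (hbdd _) ⟨Set.univ, huniv, le_rfl, rfl⟩
  have part1 : ∀ A : Set X, ∀ T ∈ 𝒯, innerSetFn 𝒟 P A ≤ innerSetFn 𝒟 P (T ⁻¹' A) := by
    intro A T hT
    apply csSup_le (hne A)
    rintro r ⟨B, hB, hBA, rfl⟩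
    calc P B ≤ P (T ⁻¹' B) := hwk B hB T hT
    _ ≤ innerSetFn 𝒟 P (T ⁻¹' A) :=
        le_csSup (hbdd _) ⟨T ⁻¹' B, hinv𝒟 B hB T hT, Set.preimage_mono hBA, rfl⟩
  refine ⟨part1, ?_⟩
  intro f hf T hT
  obtain ⟨hfa, hfb⟩ := hf
  have hrne : (Set.range f).Nonempty := Set.range_nonempty f
  have hrsub : Set.range (f ∘ T) ⊆ Set.range f := Set.range_comp_subset_range T f
  have hrne' : (Set.range (f ∘ T)).Nonempty := Set.range_nonempty _
  have hfa' : BddAbove (Set.range (f ∘ T)) := hfa.mono hrsub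
  have hfb' : BddBelow (Set.range (f ∘ T)) := hfb.mono hrsub
  set m := sInf (Set.range f) with hm
  set M := sSup (Set.range f) with hM
  set m' := sInf (Set.range (f ∘ T)) with hm'
  set M' := sSup (Set.range (f ∘ T)) with hM'
  have hmm' : m ≤ m' := csInf_le_csInf hfb hrne' hrsub
  have hM'M : M' ≤ M := csSup_le_csSup hfa hrne' hrsub
  have hm'M' : m' ≤ M' := csInf_le_csSup hrne' hfb' hfa'
  set g : ℝ → ℝ := fun α => innerSetFn 𝒟 P {x | α ≤ f x} with hg
  set g' : ℝ → ℝ := fun α => innerSetFn 𝒟 P {x | α ≤ (f ∘ T) x} with hg'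
  have hag : Antitone g := by
    intro a b hab
    exact hmono' _ _ (fun x hx => le_trans hab hx)
  have hag' : Antitone g' := by
    intro a b hab
    exact hmono' _ _ (fun x hx => le_trans hab hx)
  have hgg' : ∀ α, g α ≤ g' α := fun α => part1 {x | α ≤ f x} T hT
  -- g' = 1 on [m, m']
  have hg'1 : ∀ α ≤ m', g' α = 1 := by
    intro α hα
    have : {x | α ≤ (f ∘ T) x} = Set.univ := by
      ext x
      simp only [Set.mem_setOf_eq, Set.mem_univ, iff_true]
      exact hα.trans (csInf_le hfb' ⟨x, rfl⟩)
    show innerSetFn 𝒟 P {x | α ≤ (f ∘ T) x} = 1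
    rw [this, hIuniv]
  -- g' = 0 for α > M'
  have hg'0 : ∀ α, M' < α → g' α = 0 := by
    intro α hα
    have : {x | α ≤ (f ∘ T) x} = ∅ := by
      ext x
      simp only [Set.mem_setOf_eq, Set.mem_empty_iff_false, iff_false, not_le]
      exact lt_of_le_of_lt (le_csSup hfa' ⟨x, rfl⟩) hα
    show innerSetFn 𝒟 P {x | α ≤ (f ∘ T) x} = 0
    rw [this, hIempty]
  have hint1 : ∫ α in m..m', g' α = m' - m := by
    rw [intervalIntegral.integral_congr (g := fun _ => (1 : ℝ)) ?_]
    · simp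
    · intro α hα
      rw [Set.uIcc_of_le hmm'] at hα
      exact hg'1 α hα.2
  have hint3 : ∫ α in M'..M, g' α = 0 := by
    rw [intervalIntegral.integral_congr_ae (g := fun _ => (0 : ℝ)) ?_]
    · simp
    · refine Filter.Eventually.of_forall fun α hα => ?_
      rw [Set.uIoc_of_le hM'M] at hα
      exact hg'0 α hα.1
  have hsplit : (∫ α in m..m', g' α) + (∫ α in m'..M', g' α) + (∫ α in M'..M, g' α)
      = ∫ α in m..M, g' α := by
    rw [intervalIntegral.integral_add_adjacent_intervals hag'.intervalIntegrable
      hag'.intervalIntegrable]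
    exact intervalIntegral.integral_add_adjacent_intervals hag'.intervalIntegrable
      hag'.intervalIntegrable
  have hmonoInt : (∫ α in m..M, g α) ≤ ∫ α in m..M, g' α := by
    apply intervalIntegral.integral_mono_on ((hmm'.trans hm'M').trans hM'M)
      hag.intervalIntegrable hag'.intervalIntegrable
    intro x _
    exact hgg' x
  have key : choquetFn 𝒟 P (f ∘ T) = m + ∫ α in m..M, g' α := by
    show m' + (∫ α in m'..M', g' α) = m + ∫ α in m..M, g' α
    rw [← hsplit, hint1, hint3]
    ring
  calc choquetFn 𝒟 P f = m + ∫ α in m..M, g α := rfl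
  _ ≤ m + ∫ α in m..M, g' α := by linarith
  _ = choquetFn 𝒟 P (f ∘ T) := key.symm
end
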